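/- arXiv:1805.10682 — 4 statements merged into one kernel-verified Lean document; each statement's English description precedes it below -/
import Mathlib

section
/- If K ⊆ L is a field extension of infinite degree, and V denotes the L-vector space L^ℕ of all sequences in L, then the K-subspace K^ℕ ⊆ L^ℕ does not generate V as an L-vector space (its L-span is a proper subspace of L^ℕ). -/
/-- If `K ⊆ L` is a field extension of infinite degree, then the `L`-span of the set
`K^ℕ ⊆ L^ℕ` of sequences with entries in `K` is a proper subspace of `L^ℕ`. -/
theorem stmt2 (K L : Type) [Field K] [Field L] [Algebra K L]
    (h : ¬ FiniteDimensional K L) :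
    Submodule.span L {v : ℕ → L | ∀ n, ∃ c : K, v n = algebraMap K L c} ≠ ⊤ := by
  intro htop
  -- A K-linearly independent sequence in L
  set b := Module.Basis.ofVectorSpace K L
  have hinf : (Module.Basis.ofVectorSpaceIndex K L).Infinite := by
    intro hfin
    haveI := hfin.to_subtype
    haveI := Fintype.ofFinite (Module.Basis.ofVectorSpaceIndex K L)
    exact h (Module.Finite.of_basis b)
  let f : ℕ ↪ (Module.Basis.ofVectorSpaceIndex K L) := hinf.natEmbedding
  let x : ℕ → L := fun n => b (f n)
  have hx : LinearIndependent K x := b.linearIndependent.comp f f.injective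
  -- x ∈ span L of the set, so it's a finite combination
  have hmem : x ∈ Submodule.span L {v : ℕ → L | ∀ n, ∃ c : K, v n = algebraMap K L c} := by
    rw [htop]; trivial
  obtain ⟨n, a, g, hsum⟩ := Submodule.mem_span_set'.mp hmem
  -- each x m lies in the K-span of the finitely many coefficients a i
  have hxm : ∀ m, x m ∈ Submodule.span K (Set.range a) := by
    intro m
    have hxeq : x m = ∑ i, a i * (g i : ℕ → L) m := by
      have := congrFun hsum m
      simpa using this.symm
    rw [hxeq]
    refine Submodule.sum_mem _ fun i _ => ?_
    obtain ⟨c, hc⟩ := (g i).2 m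
    rw [hc]
    have : a i * algebraMap K L c = c • a i := by
      rw [Algebra.smul_def, mul_comm]
    rw [this]
    exact Submodule.smul_mem _ _ (Submodule.subset_span ⟨i, rfl⟩)
  -- restrict x to the finite-dimensional subspace
  set W := Submodule.span K (Set.range a)
  let x' : ℕ → W := fun m => ⟨x m, hxm m⟩
  have hx' : LinearIndependent K x' := LinearIndependent.of_comp W.subtype hx
  have h1 : Cardinal.aleph0 ≤ Module.rank K W := by
    simpa using hx'.cardinal_le_rank
  have h2 : Module.rank K W ≤ Cardinal.mk (Set.range a) := rank_span_le _
  have h3 : Cardinal.mk (Set.range a) < Cardinal.aleph0 :=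
    Cardinal.lt_aleph0_of_finite _
  exact absurd h1 (not_le_of_gt (h2.trans_lt h3))
end

section
/- Let K ⊆ L be a field extension of infinite degree. Then there exists a sequence (a_n) ∈ L^ℕ that does not lie in the L-span of K^ℕ; concretely, if (b_n) is a sequence of elements of L that are linearly independent over K, then (b_n) ∉ span_L(K^ℕ). -/
/-- If `K ⊆ L` has infinite degree, then there is a sequence in `L^ℕ` not lying in the
`L`-span of `K^ℕ`; concretely, any sequence of elements of `L` that is linearly
independent over `K` does not lie in this span. -/
theorem stmt3 (K L : Type) [Field K] [Field L] [Algebra K L]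
    (h : ¬ FiniteDimensional K L) :
    (∃ a : ℕ → L,
        a ∉ Submodule.span L {v : ℕ → L | ∀ n, ∃ c : K, v n = algebraMap K L c}) ∧
    ∀ b : ℕ → L, LinearIndependent K b →
      b ∉ Submodule.span L {v : ℕ → L | ∀ n, ∃ c : K, v n = algebraMap K L c} := by
  have key : ∀ b : ℕ → L, LinearIndependent K b →
      b ∉ Submodule.span L {v : ℕ → L | ∀ n, ∃ c : K, v n = algebraMap K L c} := by
    intro b hb hmem
    classical
    obtain ⟨n, f, g, hsum⟩ := Submodule.mem_span_set'.mp hmem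
    -- every `b m` lies in the `K`-span of the `f i`'s
    set P : Submodule K L := Submodule.span K (Set.range f) with hP
    have hbP : ∀ m, b m ∈ P := by
      intro m
      have hm : b m = ∑ i, f i • (g i : ℕ → L) m := by
        rw [← hsum]; simp
      rw [hm]
      refine Submodule.sum_mem _ fun i _ => ?_
      obtain ⟨c, hc⟩ := (g i).2 m
      have : f i • (g i : ℕ → L) m = c • f i := by
        simp [hc, Algebra.smul_def, mul_comm]
      rw [this]
      exact Submodule.smul_mem _ _ (Submodule.subset_span ⟨i, rfl⟩)
    -- restrict `b` to `P`
    have hb' : LinearIndependent K (fun m : Fin (n + 1) =>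
        (⟨b m, hbP m⟩ : P)) := by
      refine LinearIndependent.of_comp P.subtype ?_
      have : (P.subtype ∘ fun m : Fin (n + 1) => (⟨b m, hbP m⟩ : P)) =
          b ∘ (Fin.val : Fin (n + 1) → ℕ) := rfl
      rw [this]
      exact hb.comp _ Fin.val_injective
    haveI : FiniteDimensional K P := FiniteDimensional.span_of_finite K (Set.finite_range f)
    have h1 : Fintype.card (Fin (n + 1)) ≤ Module.finrank K P :=
      hb'.fintype_card_le_finrank
    have h2 : Module.finrank K P ≤ n := by
      refine (finrank_span_le_card _).trans ?_
      have := Fintype.card_range_le f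
      rw [Set.toFinset_card]
      simpa using this
    simp only [Fintype.card_fin] at h1
    omega
  refine ⟨?_, key⟩
  -- existence: take an infinite linearly independent family from a basis
  have hbasis := Module.Basis.ofVectorSpace K L
  haveI : Infinite (Module.Basis.ofVectorSpaceIndex K L) := by
    rw [Set.infinite_coe_iff]
    intro hfin
    haveI := hfin.fintype
    exact h (Module.Finite.of_basis hbasis)
  let e := Infinite.natEmbedding (Module.Basis.ofVectorSpaceIndex K L)
  exact ⟨fun m => hbasis (e m),
    key _ (hbasis.linearIndependent.comp e e.injective)⟩
end

section
/- A coproduct (direct sum) of a family of α-grounded objects of C, computed pointwise, is again α-grounded. Hence for any set of grounded objects, all α-grounded for a common α, their coproduct exists in the category G of grounded objects and agrees with the coproduct in C. -/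
set_option linter.unusedVariables false
open scoped DirectSum

structure ChainObj {J : Type} [LinearOrder J] (k : J → Type) [∀ i, Field (k i)]
    (f : ∀ i j, i ≤ j → k i →+* k j) where
  V : J → Type
  [acg : ∀ i, AddCommGroup (V i)]
  [mod : ∀ i, Module (k i) (V i)]
  t : ∀ i j (h : i ≤ j), V i →ₛₗ[f i j h] V j
  t_id : ∀ i (x : V i), t i i le_rfl x = x
  t_comp : ∀ i j l (h₁ : i ≤ j) (h₂ : j ≤ l) (x : V i),
    t j l h₂ (t i j h₁ x) = t i l (h₁.trans h₂) x

attribute [instance] ChainObj.acg ChainObj.mod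

variable {J : Type} [LinearOrder J] {k : J → Type} [∀ i, Field (k i)]
  {f : ∀ i j, i ≤ j → k i →+* k j}

@[ext]
structure ChainHom (V W : ChainObj k f) where
  app : ∀ i, V.V i →ₗ[k i] W.V i
  comm : ∀ i j (h : i ≤ j) (x : V.V i), W.t i j h (app i x) = app j (V.t i j h x)

def ChainHom.comp {U V W : ChainObj k f} (g : ChainHom V W) (h : ChainHom U V) :
    ChainHom U W where
  app i := (g.app i).comp (h.app i)
  comm i j hij x := by simp [g.comm, h.comm]

def ChainHom.id (V : ChainObj k f) : ChainHom V V where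
  app i := LinearMap.id
  comm i j hij x := rfl

def ChainHom.zero (V W : ChainObj k f) : ChainHom V W where
  app i := 0
  comm i j hij x := by simp

/-- An object `V` is `α`-grounded if for every `β > α` the component `V β` is spanned
over `k β` by the image of the transition map from level `α`. -/
def IsGrounded (α : J) (V : ChainObj k f) : Prop :=
  ∀ β (h : α < β), Submodule.span (k β) (Set.range (V.t α β h.le)) = ⊤

/-- The pointwise coproduct (direct sum) of a family of objects of `C`. -/
def sumObj {I : Type} (Vf : I → ChainObj k f) : ChainObj k f where
  V i := ⨁ x, (Vf x).V i
  t i j h :=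
    { toFun := DFinsupp.mapRange (fun x => (Vf x).t i j h) (fun x => map_zero _)
      map_add' := fun a b => by
        apply DFinsupp.ext (fun y => ?_)
        simp [DFinsupp.mapRange_apply]
      map_smul' := fun c a => by
        apply DFinsupp.ext (fun y => ?_)
        simp [DFinsupp.mapRange_apply, DirectSum.smul_apply, LinearMap.map_smulₛₗ] }
  t_id i x := by
    apply DFinsupp.ext (fun y => ?_)
    simp [DFinsupp.mapRange_apply, ChainObj.t_id]
  t_comp i j l h₁ h₂ x := by
    apply DFinsupp.ext (fun y => ?_)
    simp [DFinsupp.mapRange_apply, ChainObj.t_comp]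

/-- The canonical inclusion of a summand into the pointwise direct sum. -/
def sumIncl {I : Type} [DecidableEq I] (Vf : I → ChainObj k f) (x : I) :
    ChainHom (Vf x) (sumObj Vf) where
  app i := DirectSum.lof (k i) I (fun y => (Vf y).V i) x
  comm i j h v := by
    apply DFinsupp.ext (fun y => ?_)
    change DFinsupp.mapRange (fun x => (Vf x).t i j h) (fun x => map_zero _) (DFinsupp.single (β := fun z => (Vf z).V i) x v) y = DFinsupp.single (β := fun z => (Vf z).V j) x ((Vf x).t i j h v) y
    rw [DFinsupp.mapRange_apply]
    by_cases hxy : y = x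
    · subst hxy; simp
    · simp [DFinsupp.single_eq_of_ne, hxy, Ne.symm hxy]

/-- A pointwise coproduct of `α`-grounded objects is `α`-grounded, and (together with
the canonical inclusions) it satisfies the universal property of the coproduct in `C`,
hence also in the full subcategory `G` of grounded objects. -/
theorem stmt11 {I : Type} [DecidableEq I] (α : J) (Vf : I → ChainObj k f)
    (hVf : ∀ x, IsGrounded α (Vf x)) :
    IsGrounded α (sumObj Vf) ∧
    ∀ (T : ChainObj k f) (g : ∀ x, ChainHom (Vf x) T),
      ∃! χ : ChainHom (sumObj Vf) T, ∀ x, χ.comp (sumIncl Vf x) = g x := by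
  constructor
  · intro β hβ
    rw [eq_top_iff]
    intro v _
    induction v using DirectSum.induction_on with
    | zero => exact Submodule.zero_mem _
    | of x w =>
      have hw : w ∈ Submodule.span (k β) (Set.range ((Vf x).t α β hβ.le)) := by
        rw [hVf x β hβ]; trivial
      have := Submodule.mem_map_of_mem (f := DirectSum.lof (k β) I (fun y => (Vf y).V β) x) hw
      rw [Submodule.map_span] at this
      refine Submodule.span_mono ?_ this
      rintro _ ⟨_, ⟨a, rfl⟩, rfl⟩
      exact ⟨DirectSum.lof (k α) I (fun y => (Vf y).V α) x a, (sumIncl Vf x).comm α β hβ.le a⟩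
    | add a b ha hb => exact Submodule.add_mem _ (ha trivial) (hb trivial)
  · intro T g
    refine ⟨⟨fun i => DirectSum.toModule (k i) I (T.V i) (fun x => (g x).app i),
        fun i j h v => ?_⟩, fun x => ?_, fun χ' hχ' => ?_⟩
    · induction v using DirectSum.induction_on with
      | zero => exact (congrArg (T.t i j h) (map_zero (DirectSum.toModule (k i) I (T.V i) fun x => (g x).app i))).trans ((map_zero (T.t i j h)).trans ((congrArg (DirectSum.toModule (k j) I (T.V j) fun x => (g x).app j) (map_zero ((sumObj Vf).t i j h))).trans (map_zero (DirectSum.toModule (k j) I (T.V j) fun x => (g x).app j))).symm)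
      | of x w =>
        show T.t i j h ((DirectSum.toModule (k i) I (T.V i) fun x => (g x).app i)
              ((sumIncl Vf x).app i w))
            = (DirectSum.toModule (k j) I (T.V j) fun x => (g x).app j)
              ((sumObj Vf).t i j h ((sumIncl Vf x).app i w))
        rw [(sumIncl Vf x).comm i j h w]
        show T.t i j h ((DirectSum.toModule (k i) I (T.V i) fun x => (g x).app i)
              (DirectSum.lof (k i) I (fun y => (Vf y).V i) x w))
            = (DirectSum.toModule (k j) I (T.V j) fun x => (g x).app j)
              (DirectSum.lof (k j) I (fun y => (Vf y).V j) x ((Vf x).t i j h w))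
        rw [DirectSum.toModule_lof, DirectSum.toModule_lof]
        exact (g x).comm i j h w
      | add a b ha hb => exact (congrArg (T.t i j h) (map_add (DirectSum.toModule (k i) I (T.V i) fun x => (g x).app i) a b)).trans ((map_add (T.t i j h) _ _).trans ((congrArg₂ (· + ·) ha hb).trans ((map_add (DirectSum.toModule (k j) I (T.V j) fun x => (g x).app j) _ _).symm.trans (congrArg (DirectSum.toModule (k j) I (T.V j) fun x => (g x).app j) (map_add ((sumObj Vf).t i j h) a b).symm))))
    · ext i w
      show (DirectSum.toModule (k i) I (T.V i) fun x => (g x).app i)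
        (DirectSum.lof (k i) I (fun y => (Vf y).V i) x w) = (g x).app i w
      exact DirectSum.toModule_lof (M := fun y => (Vf y).V i) (k i) x w
    · ext i v
      have hext : ∀ x w, χ'.app i (DirectSum.of (fun y => (Vf y).V i) x w) = (g x).app i w := by
        intro x w
        have := congrArg (fun ψ => ChainHom.app ψ i w) (hχ' x)
        exact this
      induction v using DirectSum.induction_on with
      | zero => exact (map_zero (χ'.app i)).trans (map_zero (DirectSum.toModule (k i) I (T.V i) fun x => (g x).app i)).symm
      | of x w =>
        rw [hext x w]
        exact (DirectSum.toModule_lof (M := fun y => (Vf y).V i) (N := T.V i)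
          (φ := fun x => (g x).app i) (k i) x w).symm
      | add a b ha hb => exact (map_add (χ'.app i) a b).trans ((congrArg₂ (· + ·) ha hb).trans (map_add (DirectSum.toModule (k i) I (T.V i) fun x => (g x).app i) a b).symm)
end

section
/- Every Grothendieck category is complete: an abelian category with exact filtered colimits (AB5), all small coproducts, and a generator has all small products (equivalently, all small limits). -/
open CategoryTheory Limits

/-- Every Grothendieck category is complete: an abelian category with all small
coproducts (hence all colimits), exact filtered colimits (AB5) and a separator has
all small limits. -/
theorem stmt17 (C : Type u) [Category.{v} C] [Abelian C] [HasColimits C]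
    [HasFilteredColimits C] [AB5 C] (G : C) (hG : IsSeparator G) :
    HasLimits C := by
  have : WellPowered.{v} C := wellPowered_of_isDetector G hG.isDetector
  have : WellPowered.{v} Cᵒᵖ := Abelian.wellPowered_opposite
  exact hasLimits_of_hasColimits_of_isSeparating hG
end
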